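/- Let X : P(Fin m) ⟶ E and Y : P(Fin n) ⟶ E be strongly cocartesian cubes in a category E with finite coproducts and pushouts. Then the external coproduct X ⊞ Y : P(Fin m) × P(Fin n) ⟶ E defined by (X ⊞ Y)(A, B) = X(A) ⊔ Y(B) is strongly cocartesian: every square of X ⊞ Y obtained from two distinct elementary inclusions (adding a single element to A or to B) is a pushout square. Explicitly, for all A ⊆ Fin m, B ⊆ Fin n: (a) for distinct i, j ∉ A, the square on (A,B), (A∪{i},B), (A∪{j},B), (A∪{i,j},B) is a pushout; (b) for distinct i, j ∉ B, the square on (A,B), (A,B∪{i}), (A,B∪{j}), (A,B∪{i,j}) is a pushout; (c) for i ∉ A and j ∉ B, the square on (A,B), (A∪{i},B), (A,B∪{j}), (A∪{i},B∪{j}) is a pushout. -/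

import Mathlib

open CategoryTheory Limits

/-- A cube (functor on the poset of finite subsets of `Fin n`) is strongly cocartesian if each
2-dimensional face obtained by adding two distinct fresh elements is a pushout square. -/
def StronglyCocartesian {E : Type*} [Category E] {n : ℕ} (X : Finset (Fin n) ⥤ E) : Prop :=
  ∀ (U : Finset (Fin n)) (i j : Fin n), i ≠ j → i ∉ U → j ∉ U →
    IsPushout (X.map (homOfLE (Finset.subset_insert i U)))
      (X.map (homOfLE (Finset.subset_insert j U)))
      (X.map (homOfLE (Finset.subset_insert j (insert i U))))
      (X.map (homOfLE (Finset.insert_subset_insert j (Finset.subset_insert i U))))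

/-- The coproduct of two pushout squares is a pushout square. -/
lemma isPushout_coprod_map {E : Type*} [Category E] [HasBinaryCoproducts E]
    {Z X Y P Z' X' Y' P' : E}
    {f : Z ⟶ X} {g : Z ⟶ Y} {inl : X ⟶ P} {inr : Y ⟶ P}
    {f' : Z' ⟶ X'} {g' : Z' ⟶ Y'} {inl' : X' ⟶ P'} {inr' : Y' ⟶ P'}
    (h : IsPushout f g inl inr) (h' : IsPushout f' g' inl' inr') :
    IsPushout (coprod.map f f') (coprod.map g g') (coprod.map inl inl')
      (coprod.map inr inr') := by
  have weq : coprod.map f f' ≫ coprod.map inl inl' =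
      coprod.map g g' ≫ coprod.map inr inr' := by
    rw [coprod.map_map, coprod.map_map, h.w, h'.w]
  refine IsPushout.of_isColimit' ⟨weq⟩ ?_
  refine PushoutCocone.IsColimit.mk _ (fun s => coprod.desc
      (h.desc (coprod.inl ≫ s.inl) (coprod.inl ≫ s.inr) ?_)
      (h'.desc (coprod.inr ≫ s.inl) (coprod.inr ≫ s.inr) ?_)) ?_ ?_ ?_
  · have := coprod.inl ≫= s.condition
    simpa using this
  · have := coprod.inr ≫= s.condition
    simpa using this
  · intro s
    apply coprod.hom_ext <;> simp [coprod.inl_desc, coprod.inr_desc]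
  · intro s
    apply coprod.hom_ext <;> simp [coprod.inl_desc, coprod.inr_desc]
  · intro s m h1 h2
    apply coprod.hom_ext
    · apply h.hom_ext
      · simpa [coprod.inl_desc, coprod.inr_desc] using coprod.inl ≫= h1
      · simpa [coprod.inl_desc, coprod.inr_desc] using coprod.inl ≫= h2
    · apply h'.hom_ext
      · simpa [coprod.inl_desc, coprod.inr_desc] using coprod.inr ≫= h1
      · simpa [coprod.inl_desc, coprod.inr_desc] using coprod.inr ≫= h2

/-- The external coproduct `(X ⊞ Y)(A, B) = X(A) ⊔ Y(B)` of strongly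
cocartesian cubes `X`, `Y` is strongly cocartesian: every 2-dimensional face of `X ⊞ Y`
obtained from two distinct elementary inclusions — (a) both in the `X` direction, (b) both in
the `Y` direction, (c) one in each direction — is a pushout square. -/
theorem goodwillie_stmt_11 {E : Type*} [Category E] [HasBinaryCoproducts E] {m n : ℕ}
    (X : Finset (Fin m) ⥤ E) (Y : Finset (Fin n) ⥤ E)
    (hX : StronglyCocartesian X) (hY : StronglyCocartesian Y) :
    (∀ (A : Finset (Fin m)) (B : Finset (Fin n)) (i j : Fin m), i ≠ j → i ∉ A → j ∉ A →
      IsPushout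
        (coprod.map (X.map (homOfLE (Finset.subset_insert i A))) (𝟙 (Y.obj B)))
        (coprod.map (X.map (homOfLE (Finset.subset_insert j A))) (𝟙 (Y.obj B)))
        (coprod.map (X.map (homOfLE (Finset.subset_insert j (insert i A)))) (𝟙 (Y.obj B)))
        (coprod.map (X.map (homOfLE (Finset.insert_subset_insert j (Finset.subset_insert i A))))
          (𝟙 (Y.obj B)))) ∧
    (∀ (A : Finset (Fin m)) (B : Finset (Fin n)) (i j : Fin n), i ≠ j → i ∉ B → j ∉ B →
      IsPushout
        (coprod.map (𝟙 (X.obj A)) (Y.map (homOfLE (Finset.subset_insert i B))))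
        (coprod.map (𝟙 (X.obj A)) (Y.map (homOfLE (Finset.subset_insert j B))))
        (coprod.map (𝟙 (X.obj A)) (Y.map (homOfLE (Finset.subset_insert j (insert i B)))))
        (coprod.map (𝟙 (X.obj A))
          (Y.map (homOfLE (Finset.insert_subset_insert j (Finset.subset_insert i B)))))) ∧
    (∀ (A : Finset (Fin m)) (B : Finset (Fin n)) (i : Fin m) (j : Fin n), i ∉ A → j ∉ B →
      IsPushout
        (coprod.map (X.map (homOfLE (Finset.subset_insert i A))) (𝟙 (Y.obj B)))
        (coprod.map (𝟙 (X.obj A)) (Y.map (homOfLE (Finset.subset_insert j B))))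
        (coprod.map (𝟙 (X.obj (insert i A))) (Y.map (homOfLE (Finset.subset_insert j B))))
        (coprod.map (X.map (homOfLE (Finset.subset_insert i A))) (𝟙 (Y.obj (insert j B))))) := by
  refine ⟨fun A B i j hij hi hj => ?_, fun A B i j hij hi hj => ?_, fun A B i j hi hj => ?_⟩
  · exact isPushout_coprod_map (hX A i j hij hi hj)
      (IsPushout.of_horiz_isIso ⟨by simp⟩)
  · exact isPushout_coprod_map (IsPushout.of_horiz_isIso ⟨by simp⟩)
      (hY B i j hij hi hj)
  · exact isPushout_coprod_map (IsPushout.of_vert_isIso ⟨by simp⟩)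
      (IsPushout.of_horiz_isIso ⟨by simp⟩)
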